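/- arXiv:2009.08969 — 2 statements merged into one kernel-verified Lean document; each statement's English description precedes it below -/
import Mathlib

section
/- (Ramaré-type identity.) Let 𝒫 be a finite set of primes. For every positive integer n that has at least one prime factor in 𝒫, one has 1 = ∑_{p ∈ 𝒫, p ∣ n} 1 / (#{q ∈ 𝒫 : q ∣ n/p} + 𝟙[p ∤ n/p]), where 𝟙[p ∤ m] is 1 if p does not divide m and 0 otherwise. -/
/-- Ramaré-type identity. -/
theorem stmt2 (P : Finset ℕ) (hP : ∀ p ∈ P, p.Prime) (n : ℕ) (hn : 0 < n)
    (hex : ∃ p ∈ P, p ∣ n) :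
    (1 : ℝ) = ∑ p ∈ P.filter (· ∣ n),
      1 / (((P.filter (fun q => q ∣ n / p)).card : ℝ) + if ¬ p ∣ n / p then (1:ℝ) else 0) := by
  set S := P.filter (· ∣ n) with hS
  obtain ⟨p₀, hp₀P, hp₀n⟩ := hex
  have hSne : S.Nonempty := ⟨p₀, Finset.mem_filter.mpr ⟨hp₀P, hp₀n⟩⟩
  have hcard : (S.card : ℝ) ≠ 0 := by
    exact_mod_cast Finset.card_ne_zero_of_mem hSne.choose_spec
  have key : ∀ p ∈ S,
      (((P.filter (fun q => q ∣ n / p)).card : ℝ) + if ¬ p ∣ n / p then (1:ℝ) else 0)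
        = (S.card : ℝ) := by
    intro p hp
    obtain ⟨hpP, hpn⟩ := Finset.mem_filter.mp hp
    have hpprime := hP p hpP
    have hpd : (p : ℕ) ∣ n := hpn
    by_cases hdvd : p ∣ n / p
    · have : P.filter (fun q => q ∣ n / p) = S := by
        ext q
        simp only [hS, Finset.mem_filter]
        refine ⟨fun ⟨hq, hqd⟩ => ⟨hq, hqd.trans (Nat.div_dvd_of_dvd hpd)⟩,
          fun ⟨hq, hqd⟩ => ⟨hq, ?_⟩⟩
        have hqprime := hP q hq
        by_cases hqp : q = p
        · subst hqp; exact hdvd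
        · have : q ∣ (n / p) * p := by rw [Nat.div_mul_cancel hpd]; exact hqd
          rcases (Nat.Coprime.dvd_of_dvd_mul_right
            ((Nat.coprime_primes hqprime hpprime).mpr hqp) this) with h
          exact h
      rw [this]; simp [hdvd]
    · have : P.filter (fun q => q ∣ n / p) = S.erase p := by
        ext q
        simp only [hS, Finset.mem_filter, Finset.mem_erase]
        constructor
        · rintro ⟨hq, hqd⟩
          refine ⟨fun h => hdvd (h ▸ hqd), hq, hqd.trans (Nat.div_dvd_of_dvd hpd)⟩
        · rintro ⟨hqp, hq, hqd⟩
          have hqprime := hP q hq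
          have : q ∣ (n / p) * p := by rw [Nat.div_mul_cancel hpd]; exact hqd
          exact ⟨hq, Nat.Coprime.dvd_of_dvd_mul_right
            ((Nat.coprime_primes hqprime hpprime).mpr hqp) this⟩
      rw [this, Finset.card_erase_of_mem hp]
      have h1 : 1 ≤ S.card := Finset.card_pos.mpr ⟨p, hp⟩
      simp only [hdvd, not_false_iff, if_true]
      push_cast [Nat.cast_sub h1]
      ring
  rw [Finset.sum_congr rfl (fun p hp => by rw [key p hp])]
  rw [Finset.sum_const, nsmul_eq_mul, mul_one_div, div_self hcard]
end

section
/- (Dirichlet polynomial mean value theorem.) Let D(s) = ∑_{n ≤ N} a_n n^{-s} with a_n ∈ ℂ. Then ∫_{-T}^{T} |D(it)|² dt = (2T + O(N)) ∑_{n ≤ N} |a_n|², where the implied constant is absolute. -/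
open Complex Finset intervalIntegral





noncomputable def Jf (U x : ℝ) : ℝ := if x = 0 then 2*U else 2 * Real.sin (U*x) / x

lemma integral_exp_term (U x : ℝ) :
    ∫ t : ℝ in (-U)..U, Complex.exp (-(Complex.I * x) * t) = ((Jf U x : ℝ) : ℂ) := by
  rcases eq_or_ne x 0 with h | h
  · simp [Jf, h, two_mul]
  · have hx : (x:ℂ) ≠ 0 := Complex.ofReal_ne_zero.mpr h
    have hc : -(Complex.I * (x:ℂ)) ≠ 0 := by
      simp [Complex.I_ne_zero, hx]
    rw [integral_exp_mul_complex hc]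
    rw [show -(Complex.I * (x:ℂ)) * (U:ℂ) = (((-(x*U)):ℝ):ℂ) * Complex.I by push_cast; ring]
    rw [show -(Complex.I * (x:ℂ)) * ((-U:ℝ):ℂ) = (((x*U):ℝ):ℂ) * Complex.I by push_cast; ring]
    rw [Complex.exp_mul_I, Complex.exp_mul_I]
    rw [← Complex.ofReal_cos, ← Complex.ofReal_cos, ← Complex.ofReal_sin, ← Complex.ofReal_sin]
    rw [Real.cos_neg, Real.sin_neg, Jf, if_neg h]
    rw [div_eq_iff hc]
    push_cast
    ring_nf
    have : (x:ℂ) * Complex.sin (↑x * ↑U) * Complex.I * (↑x)⁻¹ = Complex.sin (↑x * ↑U) * Complex.I := by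
      field_simp
    rw [this]



lemma norm_sq_expand (N : ℕ) (a : ℕ → ℂ) (t : ℝ) :
    ‖∑ n ∈ Finset.Icc 1 N, a n * (n : ℂ) ^ (-(Complex.I * (t:ℂ)))‖ ^ 2
    = ∑ m ∈ Finset.Icc 1 N, ∑ n ∈ Finset.Icc 1 N,
        (a m * (starRingEnd ℂ) (a n) *
          Complex.exp (-(Complex.I * (((Real.log m - Real.log n) : ℝ):ℂ)) * (t:ℂ))).re := by
  have key : ∀ n ∈ Finset.Icc 1 N, a n * (n : ℂ) ^ (-(Complex.I * (t:ℂ)))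
      = a n * Complex.exp (-(Complex.I * ((Real.log n : ℝ):ℂ)) * t) := by
    intro n hn
    have hn1 : 1 ≤ n := (Finset.mem_Icc.mp hn).1
    have hn0 : (n:ℂ) ≠ 0 := Nat.cast_ne_zero.mpr (by omega)
    rw [Complex.cpow_def_of_ne_zero hn0]
    congr 2
    rw [Complex.natCast_log]
    ring
  rw [Finset.sum_congr rfl key]
  set f := ∑ n ∈ Finset.Icc 1 N, a n * Complex.exp (-(Complex.I * ((Real.log n : ℝ):ℂ)) * t) with hf
  have h2 : ‖f‖ ^ 2 = (f * (starRingEnd ℂ) f).re := by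
    rw [Complex.mul_conj, Complex.ofReal_re, Complex.normSq_eq_norm_sq]
  rw [h2, hf, map_sum, Finset.sum_mul_sum]
  rw [Complex.re_sum]
  refine Finset.sum_congr rfl fun m hm => ?_
  rw [Complex.re_sum]
  refine Finset.sum_congr rfl fun n hn => ?_
  congr 1
  rw [map_mul, ← Complex.exp_conj]
  have : (starRingEnd ℂ) (-(Complex.I * ((Real.log n : ℝ):ℂ)) * t) = Complex.I * ((Real.log n : ℝ):ℂ) * t := by
    rw [map_mul, map_neg, map_mul, Complex.conj_I, Complex.conj_ofReal, Complex.conj_ofReal]; ring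
  rw [this]
  rw [show a m * Complex.exp (-(Complex.I * ((Real.log m : ℝ):ℂ)) * t) *
      ((starRingEnd ℂ) (a n) * Complex.exp (Complex.I * ((Real.log n : ℝ):ℂ) * t))
      = a m * (starRingEnd ℂ) (a n) *
        (Complex.exp (-(Complex.I * ((Real.log m : ℝ):ℂ)) * t) * Complex.exp (Complex.I * ((Real.log n : ℝ):ℂ) * t)) by ring]
  rw [← Complex.exp_add]
  congr 2
  push_cast
  ring




lemma Jf_cont (x : ℝ) : Continuous fun U => Jf U x := by
  rcases eq_or_ne x 0 with h | h
  · simp only [Jf, if_pos h]; fun_prop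
  · simp only [Jf, if_neg h]; fun_prop

lemma integral_term_re (c : ℂ) (x U : ℝ)
    (hint : ∫ t : ℝ in (-U)..U, Complex.exp (-(Complex.I * x) * t) = ((Jf U x : ℝ) : ℂ)) :
    ∫ t : ℝ in (-U)..U, (c * Complex.exp (-(Complex.I * (x:ℂ)) * (t:ℂ))).re = c.re * Jf U x := by
  have hcont : Continuous fun t : ℝ => c * Complex.exp (-(Complex.I * (x:ℂ)) * (t:ℂ)) := by
    fun_prop
  have h := Complex.reCLM.intervalIntegral_comp_comm
    (hcont.intervalIntegrable (μ := MeasureTheory.volume) (-U) U)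
  simp only [Complex.reCLM_apply] at h
  rw [h, intervalIntegral.integral_const_mul, hint]
  simp [Complex.mul_re]

noncomputable def phi (N : ℕ) (a : ℕ → ℂ) (U : ℝ) : ℝ :=
  ∑ m ∈ Finset.Icc 1 N, ∑ n ∈ Finset.Icc 1 N,
    (a m * (starRingEnd ℂ) (a n)).re * Jf U (Real.log m - Real.log n)

lemma G_eq (N : ℕ) (a : ℕ → ℂ) (U : ℝ) :
    ∫ t in (-U)..U, ‖∑ n ∈ Finset.Icc 1 N, a n * (n : ℂ) ^ (-(Complex.I * (t:ℂ)))‖ ^ 2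
      = phi N a U := by
  rw [intervalIntegral.integral_congr (g := fun t : ℝ => ∑ m ∈ Finset.Icc 1 N, ∑ n ∈ Finset.Icc 1 N,
        (a m * (starRingEnd ℂ) (a n) *
          Complex.exp (-(Complex.I * (((Real.log m - Real.log n) : ℝ):ℂ)) * (t:ℂ))).re)
      (fun t _ => norm_sq_expand N a t)]
  rw [intervalIntegral.integral_finset_sum (fun m _ => by
    apply Continuous.intervalIntegrable (μ := MeasureTheory.volume); fun_prop)]
  refine Finset.sum_congr rfl fun m _ => ?_
  rw [intervalIntegral.integral_finset_sum (fun n _ => by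
    apply Continuous.intervalIntegrable (μ := MeasureTheory.volume); fun_prop)]
  exact Finset.sum_congr rfl fun n _ =>
    integral_term_re _ _ _ (integral_exp_term U _)




lemma J_avg0 (A D : ℝ) : ∫ U in A..(A+D), Jf U 0 = 2*A*D + D^2 := by
  have h : ∀ U : ℝ, Jf U 0 = 2 * U := by intro U; simp [Jf]
  simp only [h]
  rw [intervalIntegral.integral_const_mul, integral_id]
  ring

lemma J_avg (A D x : ℝ) (hx : x ≠ 0) :
    |∫ U in A..(A+D), Jf U x| ≤ 4 / x^2 := by
  have h1 : ∀ U : ℝ, Jf U x = (2/x) * Real.sin (U * x) := by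
    intro U; simp only [Jf, if_neg hx]; ring
  simp only [h1]
  rw [intervalIntegral.integral_const_mul,
    intervalIntegral.integral_comp_mul_right Real.sin hx, integral_sin]
  rw [smul_eq_mul, abs_mul, abs_mul]
  have h2 : |Real.cos (A*x) - Real.cos ((A+D)*x)| ≤ 2 := by
    have := Real.neg_one_le_cos (A*x)
    have := Real.cos_le_one (A*x)
    have := Real.neg_one_le_cos ((A+D)*x)
    have := Real.cos_le_one ((A+D)*x)
    rw [abs_le]; constructor <;> nlinarith
  calc |2/x| * (|x⁻¹| * |Real.cos (A*x) - Real.cos ((A+D)*x)|)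
      ≤ |2/x| * (|x⁻¹| * 2) := by
        apply mul_le_mul_of_nonneg_left _ (abs_nonneg _)
        exact mul_le_mul_of_nonneg_left h2 (abs_nonneg _)
    _ = 4 / x^2 := by
        rw [abs_div, abs_inv]
        rw [div_mul_eq_mul_div, ]
        rw [show |(2:ℝ)| = 2 by norm_num]
        field_simp
        rw [sq_abs]; ring



lemma sq_sum_aux : ∀ M : ℕ, 1 ≤ M → ∑ k ∈ Finset.Icc 1 M, (1:ℝ)/(k:ℝ)^2 ≤ 2 - 1/M := by
  intro M
  induction M with
  | zero => intro h; omega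
  | succ M ih =>
    intro _
    rcases Nat.eq_zero_or_pos M with hM | hM
    · subst hM; norm_num
    · rw [Finset.sum_Icc_succ_top (by omega)]
      have h2 : (1:ℝ)/((M+1:ℕ):ℝ)^2 ≤ 1/(M:ℝ) - 1/((M:ℝ)+1) := by
        have hM0 : (0:ℝ) < M := by exact_mod_cast hM
        rw [div_sub_div _ _ (ne_of_gt hM0) (by positivity)]
        push_cast
        rw [div_le_div_iff₀ (by positivity) (by positivity)]
        nlinarith
      have := ih hM
      push_cast at h2 ⊢
      linarith

lemma sq_sum (M : ℕ) : ∑ k ∈ Finset.Icc 1 M, (1:ℝ)/(k:ℝ)^2 ≤ 2 := by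
  rcases Nat.eq_zero_or_pos M with h | h
  · subst h; simp
  · have := sq_sum_aux M h
    have h0 : (0:ℝ) < M := by exact_mod_cast h
    have : (0:ℝ) ≤ 1/(M:ℝ) := by positivity
    linarith [sq_sum_aux M h]

lemma sum_part_le (N : ℕ) (s : Finset ℕ) (e : ℕ → ℕ)
    (hinj : ∀ x ∈ s, ∀ y ∈ s, e x = e y → x = y)
    (hmem : ∀ n ∈ s, e n ∈ Finset.Icc 1 N) :
    ∑ n ∈ s, (1:ℝ)/((e n : ℕ):ℝ)^2 ≤ 2 := by
  calc ∑ n ∈ s, (1:ℝ)/((e n : ℕ):ℝ)^2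
      = ∑ k ∈ s.image e, (1:ℝ)/(k:ℝ)^2 := (Finset.sum_image (f := fun k : ℕ => (1:ℝ)/(k:ℝ)^2) (g := e) hinj).symm
    _ ≤ 2 := ?_
  refine le_trans (Finset.sum_le_sum_of_subset_of_nonneg ?_ ?_) (sq_sum N)
  · intro k hk
    rcases Finset.mem_image.mp hk with ⟨n, hn, rfl⟩
    exact hmem n hn
  · intro k _ _; positivity

lemma inner_sum' (N m : ℕ) (hm1 : 1 ≤ m) (hmN : m ≤ N) :
    ∑ n ∈ (Finset.Icc 1 N).erase m, (1:ℝ)/((m:ℝ)-(n:ℝ))^2 ≤ 4 := by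
  classical
  have hsplit : (Finset.Icc 1 N).erase m
      = ((Finset.Icc 1 N).erase m).filter (· < m) ∪ ((Finset.Icc 1 N).erase m).filter (m < ·) := by
    ext n
    simp only [Finset.mem_union, Finset.mem_filter, Finset.mem_erase, Finset.mem_Icc]
    omega
  have hdisj : Disjoint (((Finset.Icc 1 N).erase m).filter (· < m))
      (((Finset.Icc 1 N).erase m).filter (m < ·)) := by
    apply Finset.disjoint_left.mpr
    intro n hn1 hn2
    rcases Finset.mem_filter.mp hn1 with ⟨_, h1⟩
    rcases Finset.mem_filter.mp hn2 with ⟨_, h2⟩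
    omega
  rw [hsplit, Finset.sum_union hdisj]
  have hlt : ∑ n ∈ ((Finset.Icc 1 N).erase m).filter (· < m), (1:ℝ)/((m:ℝ)-(n:ℝ))^2 ≤ 2 := by
    have key : ∀ n ∈ ((Finset.Icc 1 N).erase m).filter (· < m),
        (1:ℝ)/((m:ℝ)-(n:ℝ))^2 = (1:ℝ)/(((m - n : ℕ)):ℝ)^2 := by
      intro n hn
      rcases Finset.mem_filter.mp hn with ⟨hn1, hn2⟩
      have : ((m - n : ℕ):ℝ) = (m:ℝ) - n := by
        push_cast [Nat.cast_sub (le_of_lt hn2)]; ring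
      rw [this]
    rw [Finset.sum_congr rfl key]
    apply sum_part_le N _ (fun n => m - n)
    · intro x hx y hy hxy
      rcases Finset.mem_filter.mp hx with ⟨_, hx2⟩
      rcases Finset.mem_filter.mp hy with ⟨_, hy2⟩
      omega
    · intro n hn
      rcases Finset.mem_filter.mp hn with ⟨hn1, hn2⟩
      rcases Finset.mem_erase.mp hn1 with ⟨_, hn3⟩
      rw [Finset.mem_Icc] at hn3 ⊢
      omega
  have hgt : ∑ n ∈ ((Finset.Icc 1 N).erase m).filter (m < ·), (1:ℝ)/((m:ℝ)-(n:ℝ))^2 ≤ 2 := by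
    have key : ∀ n ∈ ((Finset.Icc 1 N).erase m).filter (m < ·),
        (1:ℝ)/((m:ℝ)-(n:ℝ))^2 = (1:ℝ)/(((n - m : ℕ)):ℝ)^2 := by
      intro n hn
      rcases Finset.mem_filter.mp hn with ⟨hn1, hn2⟩
      have : ((n - m : ℕ):ℝ) = (n:ℝ) - m := by
        push_cast [Nat.cast_sub (le_of_lt hn2)]; ring
      rw [this]
      rw [show ((m:ℝ) - n)^2 = ((n:ℝ) - m)^2 by ring]
    rw [Finset.sum_congr rfl key]
    apply sum_part_le N _ (fun n => n - m)
    · intro x hx y hy hxy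
      rcases Finset.mem_filter.mp hx with ⟨_, hx2⟩
      rcases Finset.mem_filter.mp hy with ⟨_, hy2⟩
      omega
    · intro n hn
      rcases Finset.mem_filter.mp hn with ⟨hn1, hn2⟩
      rcases Finset.mem_erase.mp hn1 with ⟨_, hn3⟩
      rw [Finset.mem_Icc] at hn3 ⊢
      omega
  linarith

lemma log_gap {m n N : ℕ} (hm1 : 1 ≤ m) (hmN : m ≤ N) (hn1 : 1 ≤ n) (hnN : n ≤ N)
    (hne : m ≠ n) (hN : 1 ≤ N) :
    ((m:ℝ) - n)^2 / (N:ℝ)^2 ≤ (Real.log m - Real.log n)^2 := by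
  have key : ∀ p q : ℕ, 1 ≤ p → p < q → q ≤ N →
      ((q:ℝ) - p) / N ≤ Real.log q - Real.log p := by
    intro p q hp hpq hqN
    have hp0 : (0:ℝ) < p := by exact_mod_cast hp
    have hq0 : (0:ℝ) < q := by exact_mod_cast (by omega : 0 < q)
    have hN0 : (0:ℝ) < N := by exact_mod_cast hN
    have h1 : Real.log ((p:ℝ)/q) ≤ (p:ℝ)/q - 1 := Real.log_le_sub_one_of_pos (by positivity)
    rw [Real.log_div (ne_of_gt hp0) (ne_of_gt hq0)] at h1
    have h2 : Real.log q - Real.log p ≥ 1 - (p:ℝ)/q := by linarith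
    have h3 : 1 - (p:ℝ)/q = ((q:ℝ) - p)/q := by field_simp
    have hqN' : (q:ℝ) ≤ N := by exact_mod_cast hqN
    have h4 : ((q:ℝ) - p)/N ≤ ((q:ℝ) - p)/q := by
      apply div_le_div_of_nonneg_left _ hq0 hqN'
      have : (p:ℝ) < q := by exact_mod_cast hpq
      linarith
    linarith
  rcases lt_or_gt_of_ne hne with h | h
  · have := key m n hm1 h hnN
    have hnonneg : (0:ℝ) ≤ ((n:ℝ) - m)/N := by
      have h' : (m:ℝ) < n := by exact_mod_cast h
      have hN0 : (0:ℝ) < N := by exact_mod_cast hN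
      apply div_nonneg <;> linarith
    have hsq : (((n:ℝ) - m)/N)^2 ≤ (Real.log n - Real.log m)^2 := by
      apply sq_le_sq' <;> nlinarith
    calc ((m:ℝ) - n)^2 / N^2 = (((n:ℝ) - m)/N)^2 := by ring
      _ ≤ (Real.log n - Real.log m)^2 := hsq
      _ = (Real.log m - Real.log n)^2 := by ring
  · have := key n m hn1 h hmN
    have hnonneg : (0:ℝ) ≤ ((m:ℝ) - n)/N := by
      have h' : (n:ℝ) < m := by exact_mod_cast h
      have hN0 : (0:ℝ) < N := by exact_mod_cast hN
      apply div_nonneg <;> linarith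
    have hsq : (((m:ℝ) - n)/N)^2 ≤ (Real.log m - Real.log n)^2 := by
      apply sq_le_sq' <;> nlinarith
    calc ((m:ℝ) - n)^2 / N^2 = (((m:ℝ) - n)/N)^2 := by ring
      _ ≤ (Real.log m - Real.log n)^2 := hsq





lemma phi_cont (N : ℕ) (a : ℕ → ℂ) : Continuous (phi N a) := by
  apply continuous_finset_sum
  intro m _
  apply continuous_finset_sum
  intro n _
  exact continuous_const.mul (Jf_cont _)

lemma int_phi (N : ℕ) (a : ℕ → ℂ) (A D : ℝ) :
    ∫ U in A..(A+D), phi N a U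
      = ∑ m ∈ Finset.Icc 1 N, ∑ n ∈ Finset.Icc 1 N, (a m * (starRingEnd ℂ) (a n)).re *
          ∫ U in A..(A+D), Jf U (Real.log m - Real.log n) := by
  unfold phi
  rw [intervalIntegral.integral_finset_sum (fun m _ => by
    apply Continuous.intervalIntegrable (μ := MeasureTheory.volume)
    exact continuous_finset_sum _ fun n _ => continuous_const.mul (Jf_cont _))]
  refine Finset.sum_congr rfl fun m _ => ?_
  rw [intervalIntegral.integral_finset_sum (fun n _ => by
    apply Continuous.intervalIntegrable (μ := MeasureTheory.volume)
    exact continuous_const.mul (Jf_cont _))]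
  exact Finset.sum_congr rfl fun n _ => intervalIntegral.integral_const_mul _ _

lemma K_bound (N m n : ℕ) (a A : ℝ) (hN : 1 ≤ N) (hm : m ∈ Finset.Icc 1 N)
    (hn : n ∈ Finset.Icc 1 N) (hne : m ≠ n) :
    |∫ U in A..(A+(N:ℝ)), Jf U (Real.log m - Real.log n)| ≤ 4*(N:ℝ)^2 / ((m:ℝ)-(n:ℝ))^2 := by
  rcases Finset.mem_Icc.mp hm with ⟨hm1, hmN⟩
  rcases Finset.mem_Icc.mp hn with ⟨hn1, hnN⟩
  have hgap := log_gap hm1 hmN hn1 hnN hne hN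
  have hN0 : (0:ℝ) < N := by exact_mod_cast Nat.lt_of_lt_of_le Nat.zero_lt_one hN
  have hmn : ((m:ℝ)-(n:ℝ)) ≠ 0 := by
    intro h
    exact hne (by exact_mod_cast sub_eq_zero.mp h)
  have hpos : (0:ℝ) < ((m:ℝ)-(n:ℝ))^2 / (N:ℝ)^2 := by positivity
  have hx2 : (0:ℝ) < (Real.log m - Real.log n)^2 := lt_of_lt_of_le hpos hgap
  have hx : Real.log m - Real.log n ≠ 0 := by
    intro h; rw [h] at hx2; simp at hx2
  refine le_trans (J_avg A N _ hx) ?_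
  rw [div_le_div_iff₀ hx2 (by positivity)]
  have h' : ((m:ℝ)-(n:ℝ))^2 ≤ (Real.log ↑m - Real.log ↑n)^2 * (N:ℝ)^2 :=
    (div_le_iff₀ (by positivity)).mp hgap
  nlinarith [h']

lemma avg_bound (N : ℕ) (a : ℕ → ℂ) (A : ℝ) (hN : 1 ≤ N) :
    |(∫ U in A..(A+(N:ℝ)), phi N a U) - (2*A*(N:ℝ) + (N:ℝ)^2) * (∑ n ∈ Finset.Icc 1 N, ‖a n‖^2)|
      ≤ 16 * (N:ℝ)^2 * (∑ n ∈ Finset.Icc 1 N, ‖a n‖^2) := by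
  classical
  have hN0 : (0:ℝ) < N := by exact_mod_cast Nat.lt_of_lt_of_le Nat.zero_lt_one hN
  rw [int_phi]
  set s := Finset.Icc 1 N with hs
  set S := ∑ n ∈ s, ‖a n‖^2 with hSdef
  set K : ℕ → ℕ → ℝ := fun m n => ∫ U in A..(A+(N:ℝ)), Jf U (Real.log m - Real.log n) with hK
  set E := ∑ m ∈ s, ∑ n ∈ s.erase m, (a m * (starRingEnd ℂ) (a n)).re * K m n with hE
  have hsplit : ∑ m ∈ s, ∑ n ∈ s, (a m * (starRingEnd ℂ) (a n)).re * K m n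
      = (2*A*(N:ℝ) + (N:ℝ)^2) * S + E := by
    have h1 : ∀ m ∈ s, ∑ n ∈ s, (a m * (starRingEnd ℂ) (a n)).re * K m n
        = ‖a m‖^2 * (2*A*(N:ℝ) + (N:ℝ)^2)
          + ∑ n ∈ s.erase m, (a m * (starRingEnd ℂ) (a n)).re * K m n := by
      intro m hm
      rw [← Finset.add_sum_erase s _ hm]
      congr 1
      have hKmm : K m m = 2*A*(N:ℝ) + (N:ℝ)^2 := by
        show (∫ U in A..(A+(N:ℝ)), Jf U (Real.log m - Real.log m)) = _
        rw [sub_self, J_avg0]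
      rw [hKmm, Complex.mul_conj]
      simp [Complex.normSq_eq_norm_sq, ← Complex.ofReal_pow]
    rw [Finset.sum_congr rfl h1, Finset.sum_add_distrib, ← Finset.sum_mul, ← hSdef, ← hE]
    ring
  rw [hsplit, show (2*A*(N:ℝ) + (N:ℝ)^2) * S + E - (2*A*(N:ℝ) + (N:ℝ)^2) * S = E from by ring]
  -- bound |E|
  have hterm : ∀ m ∈ s, ∀ n ∈ s.erase m,
      |(a m * (starRingEnd ℂ) (a n)).re * K m n|
        ≤ ‖a m‖^2/2 * (4*(N:ℝ)^2 * (1/((m:ℝ)-(n:ℝ))^2))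
          + ‖a n‖^2/2 * (4*(N:ℝ)^2 * (1/((m:ℝ)-(n:ℝ))^2)) := by
    intro m hm n hn
    rcases Finset.mem_erase.mp hn with ⟨hne, hns⟩
    rw [abs_mul]
    have h1 : |(a m * (starRingEnd ℂ) (a n)).re| ≤ ‖a m‖ * ‖a n‖ := by
      refine le_trans (Complex.abs_re_le_norm _) ?_
      rw [norm_mul, Complex.norm_conj]
    have h2 : |K m n| ≤ 4*(N:ℝ)^2 / ((m:ℝ)-(n:ℝ))^2 :=
      K_bound N m n 0 A hN hm hns (fun h => hne h.symm)
    have h3 : (0:ℝ) ≤ ‖a m‖ * ‖a n‖ := by positivity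
    have h4 : ‖a m‖ * ‖a n‖ ≤ (‖a m‖^2 + ‖a n‖^2)/2 := by nlinarith [sq_nonneg (‖a m‖ - ‖a n‖)]
    have h5 : (0:ℝ) ≤ 4*(N:ℝ)^2 / ((m:ℝ)-(n:ℝ))^2 := by positivity
    calc |(a m * (starRingEnd ℂ) (a n)).re| * |K m n|
        ≤ (‖a m‖ * ‖a n‖) * (4*(N:ℝ)^2 / ((m:ℝ)-(n:ℝ))^2) :=
          mul_le_mul h1 h2 (abs_nonneg _) h3
      _ ≤ ((‖a m‖^2 + ‖a n‖^2)/2) * (4*(N:ℝ)^2 / ((m:ℝ)-(n:ℝ))^2) :=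
          mul_le_mul_of_nonneg_right h4 h5
      _ = ‖a m‖^2/2 * (4*(N:ℝ)^2 * (1/((m:ℝ)-(n:ℝ))^2))
          + ‖a n‖^2/2 * (4*(N:ℝ)^2 * (1/((m:ℝ)-(n:ℝ))^2)) := by ring
  have hmemsq : ∀ m ∈ s, ∑ n ∈ s.erase m, (1:ℝ)/((m:ℝ)-(n:ℝ))^2 ≤ 4 := by
    intro m hm
    rcases Finset.mem_Icc.mp (hs ▸ hm) with ⟨hm1, hmN⟩
    exact inner_sum' N m hm1 hmN
  have hP1 : ∑ m ∈ s, ∑ n ∈ s.erase m, ‖a m‖^2/2 * (4*(N:ℝ)^2 * (1/((m:ℝ)-(n:ℝ))^2))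
      ≤ 8 * (N:ℝ)^2 * S := by
    have step : ∀ m ∈ s, ∑ n ∈ s.erase m, ‖a m‖^2/2 * (4*(N:ℝ)^2 * (1/((m:ℝ)-(n:ℝ))^2))
        ≤ 8 * (N:ℝ)^2 * ‖a m‖^2 := by
      intro m hm
      rw [show (fun n : ℕ => ‖a m‖^2/2 * (4*(N:ℝ)^2 * (1/((m:ℝ)-(n:ℝ))^2)))
          = fun n : ℕ => (‖a m‖^2 * (2*(N:ℝ)^2)) * (1/((m:ℝ)-(n:ℝ))^2) from funext fun n => by ring]
      rw [← Finset.mul_sum]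
      calc (‖a m‖^2 * (2*(N:ℝ)^2)) * ∑ n ∈ s.erase m, (1:ℝ)/((m:ℝ)-(n:ℝ))^2
          ≤ (‖a m‖^2 * (2*(N:ℝ)^2)) * 4 :=
            mul_le_mul_of_nonneg_left (hmemsq m hm) (by positivity)
        _ = 8 * (N:ℝ)^2 * ‖a m‖^2 := by ring
    calc ∑ m ∈ s, ∑ n ∈ s.erase m, ‖a m‖^2/2 * (4*(N:ℝ)^2 * (1/((m:ℝ)-(n:ℝ))^2))
        ≤ ∑ m ∈ s, 8 * (N:ℝ)^2 * ‖a m‖^2 := Finset.sum_le_sum step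
      _ = 8 * (N:ℝ)^2 * S := by rw [hSdef, Finset.mul_sum]
  have hswap : ∑ m ∈ s, ∑ n ∈ s.erase m, ‖a n‖^2/2 * (4*(N:ℝ)^2 * (1/((m:ℝ)-(n:ℝ))^2))
      = ∑ n ∈ s, ∑ m ∈ s.erase n, ‖a n‖^2/2 * (4*(N:ℝ)^2 * (1/((m:ℝ)-(n:ℝ))^2)) := by
    apply Finset.sum_comm'
    intro m n
    simp only [Finset.mem_erase]
    constructor
    · rintro ⟨h1, h2, h3⟩; exact ⟨⟨fun h => h2 h.symm, h1⟩, h3⟩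
    · rintro ⟨⟨h1, h2⟩, h3⟩; exact ⟨h2, fun h => h1 h.symm, h3⟩
  have hP2 : ∑ m ∈ s, ∑ n ∈ s.erase m, ‖a n‖^2/2 * (4*(N:ℝ)^2 * (1/((m:ℝ)-(n:ℝ))^2))
      ≤ 8 * (N:ℝ)^2 * S := by
    rw [hswap]
    have step : ∀ n ∈ s, ∑ m ∈ s.erase n, ‖a n‖^2/2 * (4*(N:ℝ)^2 * (1/((m:ℝ)-(n:ℝ))^2))
        ≤ 8 * (N:ℝ)^2 * ‖a n‖^2 := by
      intro n hn
      rw [show (fun m : ℕ => ‖a n‖^2/2 * (4*(N:ℝ)^2 * (1/((m:ℝ)-(n:ℝ))^2)))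
          = fun m : ℕ => (‖a n‖^2 * (2*(N:ℝ)^2)) * (1/((n:ℝ)-(m:ℝ))^2) from funext fun m => by
            rw [show ((m:ℝ)-(n:ℝ))^2 = ((n:ℝ)-(m:ℝ))^2 from by ring]; ring]
      rw [← Finset.mul_sum]
      calc (‖a n‖^2 * (2*(N:ℝ)^2)) * ∑ m ∈ s.erase n, (1:ℝ)/((n:ℝ)-(m:ℝ))^2
          ≤ (‖a n‖^2 * (2*(N:ℝ)^2)) * 4 :=
            mul_le_mul_of_nonneg_left (hmemsq n hn) (by positivity)
        _ = 8 * (N:ℝ)^2 * ‖a n‖^2 := by ring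
    calc ∑ n ∈ s, ∑ m ∈ s.erase n, ‖a n‖^2/2 * (4*(N:ℝ)^2 * (1/((m:ℝ)-(n:ℝ))^2))
        ≤ ∑ n ∈ s, 8 * (N:ℝ)^2 * ‖a n‖^2 := Finset.sum_le_sum step
      _ = 8 * (N:ℝ)^2 * S := by rw [hSdef, Finset.mul_sum]
  have hEb : |E| ≤ 16 * (N:ℝ)^2 * S := by
    calc |E| ≤ ∑ m ∈ s, |∑ n ∈ s.erase m, (a m * (starRingEnd ℂ) (a n)).re * K m n| :=
          Finset.abs_sum_le_sum_abs _ _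
      _ ≤ ∑ m ∈ s, ∑ n ∈ s.erase m, |(a m * (starRingEnd ℂ) (a n)).re * K m n| :=
          Finset.sum_le_sum fun m _ => Finset.abs_sum_le_sum_abs _ _
      _ ≤ ∑ m ∈ s, ∑ n ∈ s.erase m,
            (‖a m‖^2/2 * (4*(N:ℝ)^2 * (1/((m:ℝ)-(n:ℝ))^2))
              + ‖a n‖^2/2 * (4*(N:ℝ)^2 * (1/((m:ℝ)-(n:ℝ))^2))) :=
          Finset.sum_le_sum fun m hm => Finset.sum_le_sum fun n hn => hterm m hm n hn
      _ = (∑ m ∈ s, ∑ n ∈ s.erase m, ‖a m‖^2/2 * (4*(N:ℝ)^2 * (1/((m:ℝ)-(n:ℝ))^2)))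
          + ∑ m ∈ s, ∑ n ∈ s.erase m, ‖a n‖^2/2 * (4*(N:ℝ)^2 * (1/((m:ℝ)-(n:ℝ))^2)) := by
          rw [← Finset.sum_add_distrib]
          exact Finset.sum_congr rfl fun m _ => Finset.sum_add_distrib
      _ ≤ 8 * (N:ℝ)^2 * S + 8 * (N:ℝ)^2 * S := add_le_add hP1 hP2
      _ = 16 * (N:ℝ)^2 * S := by ring
  exact hEb

lemma F_cont (N : ℕ) (a : ℕ → ℂ) :
    Continuous fun t : ℝ => ‖∑ n ∈ Finset.Icc 1 N, a n * (n : ℂ) ^ (-(Complex.I * (t:ℂ)))‖ ^ 2 := by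
  apply Continuous.pow
  apply Continuous.norm
  apply continuous_finset_sum
  intro n hn
  apply Continuous.mul continuous_const
  apply Continuous.const_cpow (by fun_prop)
  left
  exact Nat.cast_ne_zero.mpr (by have := (Finset.mem_Icc.mp hn).1; omega)

lemma phi_nonneg (N : ℕ) (a : ℕ → ℂ) (T : ℝ) (hT : 0 ≤ T) : 0 ≤ phi N a T := by
  rw [← G_eq]
  apply intervalIntegral.integral_nonneg (by linarith)
  intro u _
  positivity

lemma phi_mono (N : ℕ) (a : ℕ → ℂ) {T U : ℝ} (hT : 0 ≤ T) (hTU : T ≤ U) :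
    phi N a T ≤ phi N a U := by
  rw [← G_eq, ← G_eq]
  apply intervalIntegral.integral_mono_interval (by linarith) (by linarith) hTU
  · filter_upwards with t
    positivity
  · exact (F_cont N a).intervalIntegrable _ _

/-- Dirichlet polynomial mean value theorem. -/
theorem stmt5 : ∃ C : ℝ, 0 < C ∧ ∀ (N : ℕ) (T : ℝ) (a : ℕ → ℂ), 1 ≤ N → 1 ≤ T →
    |(∫ t in (-T)..T,
        ‖∑ n ∈ Finset.Icc 1 N, a n * (n : ℂ) ^ (-(Complex.I * (t:ℂ)))‖ ^ 2)
      - 2 * T * ∑ n ∈ Finset.Icc 1 N, ‖a n‖ ^ 2|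
      ≤ C * N * ∑ n ∈ Finset.Icc 1 N, ‖a n‖ ^ 2 := by
  refine ⟨17, by norm_num, fun N T a hN hT => ?_⟩
  have hNR : (1:ℝ) ≤ (N:ℝ) := by exact_mod_cast hN
  have hN0 : (0:ℝ) < N := by linarith
  rw [G_eq N a T]
  set S := ∑ n ∈ Finset.Icc 1 N, ‖a n‖^2 with hS
  have hS0 : (0:ℝ) ≤ S := Finset.sum_nonneg fun n _ => by positivity
  have hphiC := phi_cont N a
  have hup : phi N a T - 2*T*S ≤ 17*(N:ℝ)*S := by
    have h1 : (N:ℝ) * phi N a T ≤ ∫ U in T..(T+(N:ℝ)), phi N a U := by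
      have heq : (N:ℝ) * phi N a T = ∫ U in T..(T+(N:ℝ)), phi N a T := by
        rw [intervalIntegral.integral_const, smul_eq_mul]; ring
      rw [heq]
      apply intervalIntegral.integral_mono_on (by linarith)
        intervalIntegrable_const (hphiC.intervalIntegrable _ _)
      intro U hU
      exact phi_mono N a (by linarith) hU.1
    have h2 := abs_le.mp (avg_bound N a T hN)
    have h3 : (∫ U in T..(T+(N:ℝ)), phi N a U) ≤ (2*T*(N:ℝ) + (N:ℝ)^2)*S + 16*(N:ℝ)^2*S := by
      linarith [h2.2]
    have h4 : (N:ℝ) * (phi N a T - 2*T*S) ≤ (N:ℝ) * (17*(N:ℝ)*S) := by nlinarith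
    exact le_of_mul_le_mul_left h4 hN0
  have hlow : 2*T*S - phi N a T ≤ 17*(N:ℝ)*S := by
    rcases le_or_gt (N:ℝ) T with hTN | hTN
    · have h1 : (∫ U in (T-(N:ℝ))..((T-(N:ℝ))+(N:ℝ)), phi N a U) ≤ (N:ℝ) * phi N a T := by
        have heq : (N:ℝ) * phi N a T = ∫ U in (T-(N:ℝ))..((T-(N:ℝ))+(N:ℝ)), phi N a T := by
          rw [intervalIntegral.integral_const, smul_eq_mul]; ring
        rw [heq]
        apply intervalIntegral.integral_mono_on (by linarith)
          (hphiC.intervalIntegrable _ _) intervalIntegrable_const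
        intro U hU
        exact phi_mono N a (by linarith [hU.1]) (by linarith [hU.2])
      have h2 := abs_le.mp (avg_bound N a (T-(N:ℝ)) hN)
      have h3 : (2*(T-(N:ℝ))*(N:ℝ) + (N:ℝ)^2)*S - 16*(N:ℝ)^2*S
          ≤ ∫ U in (T-(N:ℝ))..((T-(N:ℝ))+(N:ℝ)), phi N a U := by
        linarith [h2.1]
      have h4 : (N:ℝ) * (2*T*S - phi N a T) ≤ (N:ℝ) * (17*(N:ℝ)*S) := by nlinarith
      exact le_of_mul_le_mul_left h4 hN0
    · have hpos := phi_nonneg N a T (by linarith)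
      nlinarith [mul_nonneg (le_of_lt (sub_pos.mpr hTN)) hS0]
  rw [abs_le]
  constructor <;> linarith
end
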